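/- Let B : V → V be a skew-adjoint linear operator on a 2n-dimensional real inner product space, and suppose B is invertible. Then there exist positive real numbers a₁,…,aₙ and an orthonormal basis e₁,…,e_{2n} of V such that B e_{2k−1} = a_k e_{2k} and B e_{2k} = −a_k e_{2k−1} for k = 1,…,n. -/

import Mathlib

open Module Submodule

private theorem skew_aux (n : ℕ) :
    ∀ (V : Type*) [NormedAddCommGroup V] [InnerProductSpace ℝ V]
      [FiniteDimensional ℝ V], Module.finrank ℝ V = 2 * n →
    ∀ B : V →ₗ[ℝ] V, (∀ u v : V, (inner ℝ (B u) v : ℝ) = -(inner ℝ u (B v) : ℝ)) →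
    Function.Injective B →
    ∃ a : Fin n → ℝ, (∀ k, 0 < a k) ∧
      ∃ e : OrthonormalBasis (Fin (2 * n)) ℝ V,
        ∀ k : Fin n,
          B (e ⟨2 * (k : ℕ), by have := k.isLt; omega⟩)
              = a k • e ⟨2 * (k : ℕ) + 1, by have := k.isLt; omega⟩ ∧
          B (e ⟨2 * (k : ℕ) + 1, by have := k.isLt; omega⟩)
              = -(a k) • e ⟨2 * (k : ℕ), by have := k.isLt; omega⟩ := by
  induction n with
  | zero =>
    intro V _ _ _ hrank B hB hinj
    haveI : Subsingleton V := Module.finrank_zero_iff.mp (by simpa using hrank)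
    have hON : Orthonormal ℝ (fun i : Fin 0 => (0 : V)) := by
      rw [orthonormal_iff_ite]; intro i; exact i.elim0
    refine ⟨fun k => k.elim0, fun k => k.elim0,
      OrthonormalBasis.mk hON (le_of_eq (Subsingleton.elim _ _)), fun k => k.elim0⟩
  | succ n ih =>
    intro V _ _ _ hrank B hB hinj
    -- the symmetric operator B ∘ B
    have hT : (B ∘ₗ B).IsSymmetric := by
      intro x y
      simp only [LinearMap.comp_apply]
      rw [hB, hB, neg_neg]
    set i0 : Fin (2 * (n + 1)) := ⟨0, by omega⟩ with hi0
    set u : V := hT.eigenvectorBasis hrank i0 with hu_def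
    set μ : ℝ := hT.eigenvalues hrank i0 with hμ_def
    have hu : B (B u) = μ • u := by
      have h := hT.apply_eigenvectorBasis hrank i0
      rw [LinearMap.comp_apply] at h
      exact_mod_cast h
    have hunorm : ‖u‖ = 1 := (hT.eigenvectorBasis hrank).orthonormal.1 i0
    have hune : u ≠ 0 := by
      intro h; rw [h] at hunorm; simp at hunorm
    have hBune : B u ≠ 0 := by
      intro h
      exact hune (hinj (by rw [h, map_zero]))
    have hμeq : μ = -‖B u‖ ^ 2 := by
      have h1 : (inner ℝ (B (B u)) u : ℝ) = μ := by
        rw [hu, real_inner_smul_left, real_inner_self_eq_norm_sq, hunorm]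
        ring
      have h2 : (inner ℝ (B (B u)) u : ℝ) = -‖B u‖ ^ 2 := by
        rw [hB, real_inner_self_eq_norm_sq]
      linarith
    have hμneg : μ < 0 := by
      have := norm_pos_iff.mpr hBune
      rw [hμeq]; nlinarith
    set a : ℝ := Real.sqrt (-μ) with ha_def
    have ha : 0 < a := Real.sqrt_pos.mpr (by linarith)
    have ha2 : a * a = -μ := Real.mul_self_sqrt (by linarith)
    set e₂ : V := a⁻¹ • B u with he2_def
    have hnBu : ‖B u‖ = a := by
      rw [ha_def, hμeq, neg_neg, Real.sqrt_sq (norm_nonneg _)]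
    have h12 : (inner ℝ u e₂ : ℝ) = 0 := by
      have h0 : (inner ℝ u (B u) : ℝ) = 0 := by
        have h1 := hB u u
        have h2 := real_inner_comm u (B u)
        linarith
      rw [he2_def, real_inner_smul_right, h0, mul_zero]
    have hn2 : ‖e₂‖ = 1 := by
      rw [he2_def, norm_smul, Real.norm_eq_abs, abs_inv, abs_of_pos ha, hnBu,
        inv_mul_cancel₀ ha.ne']
    have hBu_eq : B u = a • e₂ := by
      rw [he2_def, smul_smul, mul_inv_cancel₀ ha.ne', one_smul]
    have hBe2 : B e₂ = -a • u := by
      rw [he2_def, map_smul, hu, smul_smul]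
      congr 1
      have : μ = -(a * a) := by linarith
      rw [this]
      field_simp
    -- the span of u and e₂
    set S : Submodule ℝ V := Submodule.span ℝ (Set.range ![u, e₂]) with hS_def
    have h21 : (inner ℝ e₂ u : ℝ) = 0 := by rw [real_inner_comm]; exact h12
    have hpair : Orthonormal ℝ ![u, e₂] := by
      rw [orthonormal_iff_ite]
      intro i j
      fin_cases i <;> fin_cases j <;>
        simp [hunorm, hn2, h12, h21, real_inner_self_eq_norm_sq]
    have huS : u ∈ S := subset_span ⟨0, rfl⟩
    have he2S : e₂ ∈ S := subset_span ⟨1, rfl⟩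
    have hS2 : finrank ℝ S = 2 := by
      rw [hS_def, finrank_span_eq_card hpair.linearIndependent]
      simp
    set W : Submodule ℝ V := Sᗮ with hW_def
    have hWrank : finrank ℝ W = 2 * n := by
      have h := S.finrank_add_finrank_orthogonal
      rw [hS2, hrank] at h
      rw [hW_def]
      omega
    have hBS : ∀ x ∈ S, B x ∈ S := by
      intro x hx
      induction hx using Submodule.span_induction with
      | mem x hx =>
        obtain ⟨i, rfl⟩ := hx
        fin_cases i
        · simpa [hBu_eq] using S.smul_mem a he2S
        · simpa [hBe2] using S.smul_mem (-a) huS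
      | zero => simpa using S.zero_mem
      | add x y hx hy hx' hy' => simpa using S.add_mem hx' hy'
      | smul c x hx hx' => simpa using S.smul_mem c hx'
    have hBW : ∀ w ∈ W, B w ∈ W := by
      intro w hw
      have h0 : ∀ s ∈ S, (inner ℝ s w : ℝ) = 0 := (Submodule.mem_orthogonal S w).mp hw
      rw [hW_def, Submodule.mem_orthogonal]
      intro s hs
      rw [real_inner_comm, hB, real_inner_comm, h0 (B s) (hBS s hs), neg_zero]
    -- the restricted operator on W
    set B' : W →ₗ[ℝ] W := B.restrict hBW with hB'_def
    have hB'coe : ∀ x : W, (B' x : V) = B (x : V) := fun x =>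
      LinearMap.restrict_coe_apply B hBW x
    have hB'skew : ∀ x y : W, (inner ℝ (B' x) y : ℝ) = -(inner ℝ x (B' y) : ℝ) := by
      intro x y
      rw [Submodule.coe_inner, Submodule.coe_inner, hB'coe, hB'coe, hB]
    have hB'inj : Function.Injective B' := by
      intro x y hxy
      apply Subtype.ext
      apply hinj
      rw [← hB'coe, ← hB'coe, hxy]
    obtain ⟨a', ha', e', he'⟩ := ih W hWrank B' hB'skew hB'inj
    -- build the combined family
    set f : Fin (2 * (n + 1)) → V :=
      fun i => Fin.cases u (fun j => Fin.cases e₂ (fun m => (e' m : V)) j) i with hf_def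
    have hf0 : ∀ h : (0 : ℕ) < 2 * (n + 1), f ⟨0, h⟩ = u := fun h => rfl
    have hf1 : ∀ h : (1 : ℕ) < 2 * (n + 1), f ⟨1, h⟩ = e₂ := fun h => rfl
    have hfs : ∀ (m : ℕ) (hm : m < 2 * n) (h : m + 2 < 2 * (n + 1)),
        f ⟨m + 2, h⟩ = (e' ⟨m, hm⟩ : V) := fun m hm h => rfl
    have hON : Orthonormal ℝ f := by
      have hucross : ∀ m : Fin (2 * n), (inner ℝ u ((e' m : W) : V) : ℝ) = 0 :=
        fun m => Submodule.inner_right_of_mem_orthogonal huS (SetLike.coe_mem _)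
      have hucross' : ∀ m : Fin (2 * n), (inner ℝ ((e' m : W) : V) u : ℝ) = 0 :=
        fun m => by rw [real_inner_comm]; exact hucross m
      have he2cross : ∀ m : Fin (2 * n), (inner ℝ e₂ ((e' m : W) : V) : ℝ) = 0 :=
        fun m => Submodule.inner_right_of_mem_orthogonal he2S (SetLike.coe_mem _)
      have he2cross' : ∀ m : Fin (2 * n), (inner ℝ ((e' m : W) : V) e₂ : ℝ) = 0 :=
        fun m => by rw [real_inner_comm]; exact he2cross m
      have he'on := e'.orthonormal
      rw [orthonormal_iff_ite] at he'on
      have hee : ∀ m m' : Fin (2 * n),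
          (inner ℝ ((e' m : W) : V) ((e' m' : W) : V) : ℝ) = if m = m' then 1 else 0 :=
        fun m m' => by rw [← Submodule.coe_inner]; exact he'on m m'
      have hc0 : f 0 = u := by simp only [hf_def, Fin.cases_zero]
      have hc1 : f (Fin.succ 0) = e₂ := by
        simp only [hf_def, Fin.cases_succ, Fin.cases_zero]
      have hc2 : ∀ m : Fin (2 * n), f (Fin.succ (Fin.succ m)) = ((e' m : W) : V) := by
        intro m; simp only [hf_def, Fin.cases_succ]
      rw [orthonormal_iff_ite]
      intro i j
      induction i using Fin.cases with
      | zero =>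
        induction j using Fin.cases with
        | zero =>
          rw [hc0, if_pos rfl, real_inner_self_eq_norm_sq, hunorm]; norm_num
        | succ j' =>
          induction j' using Fin.cases with
          | zero =>
            rw [hc0, hc1, if_neg (Ne.symm (Fin.succ_ne_zero 0))]; exact h12
          | succ j'' =>
            rw [hc0, hc2 j'', if_neg (Ne.symm (Fin.succ_ne_zero _))]; exact hucross _
      | succ i' =>
        induction i' using Fin.cases with
        | zero =>
          induction j using Fin.cases with
          | zero =>
            rw [hc1, hc0, if_neg (Fin.succ_ne_zero 0)]; exact h21
          | succ j' =>
            induction j' using Fin.cases with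
            | zero =>
              rw [hc1, if_pos rfl, real_inner_self_eq_norm_sq, hn2]; norm_num
            | succ j'' =>
              rw [hc1, hc2 j'',
                if_neg (fun h => Fin.succ_ne_zero j'' (Fin.succ_inj.mp h).symm)]
              exact he2cross _
        | succ i'' =>
          induction j using Fin.cases with
          | zero =>
            rw [hc2 i'', hc0, if_neg (Fin.succ_ne_zero _)]; exact hucross' _
          | succ j' =>
            induction j' using Fin.cases with
            | zero =>
              rw [hc2 i'', hc1,
                if_neg (fun h => Fin.succ_ne_zero i'' (Fin.succ_inj.mp h))]
              exact he2cross' _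
            | succ j'' =>
              rw [hc2 i'', hc2 j'', hee]
              simp [Fin.succ_inj]
    haveI : Nonempty (Fin (2 * (n + 1))) := ⟨⟨0, by omega⟩⟩
    have hcard : Fintype.card (Fin (2 * (n + 1))) = finrank ℝ V := by
      simp [hrank]
    set b : Basis (Fin (2 * (n + 1))) ℝ V :=
      basisOfLinearIndependentOfCardEqFinrank hON.linearIndependent hcard with hb_def
    have hbcoe : ⇑b = f := coe_basisOfLinearIndependentOfCardEqFinrank _ _
    set e : OrthonormalBasis (Fin (2 * (n + 1))) ℝ V :=
      b.toOrthonormalBasis (by rwa [hbcoe]) with he_def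
    have he : ∀ i, e i = f i := by
      intro i
      rw [he_def, Basis.coe_toOrthonormalBasis, hbcoe]
    have he2' : ∀ (i : Fin (2 * (n + 1))) (m : Fin (2 * n)),
        (i : ℕ) = (m : ℕ) + 2 → e i = (e' m : V) := by
      rintro ⟨iv, hi⟩ ⟨mv, hm⟩ him
      simp only at him
      subst him
      rw [he, hfs mv hm hi]
    refine ⟨Fin.cons a a', ?_, e, ?_⟩
    · intro k
      refine Fin.cases ?_ ?_ k
      · simpa using ha
      · intro j; simpa using ha' j
    · intro k
      refine Fin.cases ?_ ?_ k
      · constructor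
        · rw [show ((⟨2 * ((0 : Fin (n+1)) : ℕ), by omega⟩ : Fin (2 * (n + 1)))) =
              ⟨0, by omega⟩ from rfl, he, hf0]
          rw [show ((⟨2 * ((0 : Fin (n+1)) : ℕ) + 1, by omega⟩ : Fin (2 * (n + 1)))) =
              ⟨1, by omega⟩ from rfl, he, hf1]
          simpa using hBu_eq
        · rw [show ((⟨2 * ((0 : Fin (n+1)) : ℕ) + 1, by omega⟩ : Fin (2 * (n + 1)))) =
              ⟨1, by omega⟩ from rfl, he, hf1]
          rw [show ((⟨2 * ((0 : Fin (n+1)) : ℕ), by omega⟩ : Fin (2 * (n + 1)))) =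
              ⟨0, by omega⟩ from rfl, he, hf0]
          simpa using hBe2
      · intro j
        have hj := j.isLt
        have hmk1 : e ⟨2 * ((Fin.succ j : Fin (n+1)) : ℕ), by have := (Fin.succ j).isLt; omega⟩
            = (e' ⟨2 * (j : ℕ), by omega⟩ : V) := by
          apply he2'
          simp [Fin.val_succ]
          omega
        have hmk2 : e ⟨2 * ((Fin.succ j : Fin (n+1)) : ℕ) + 1,
              by have := (Fin.succ j).isLt; omega⟩
            = (e' ⟨2 * (j : ℕ) + 1, by omega⟩ : V) := by
          apply he2'
          simp [Fin.val_succ]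
          omega
        have hIH := he' j
        constructor
        · rw [hmk1, hmk2, ← hB'coe, hIH.1]
          simp [Fin.cons_succ]
        · rw [hmk1, hmk2, ← hB'coe, hIH.2]
          simp [Fin.cons_succ]

/-- A skew-adjoint invertible operator `B` on a `2n`-dimensional real inner product space admits
positive numbers `a₁,…,aₙ` and an orthonormal basis `e₁,…,e_{2n}` with
`B e_{2k-1} = a_k e_{2k}` and `B e_{2k} = -a_k e_{2k-1}`. -/
theorem stmt_5 {V : Type*} [NormedAddCommGroup V] [InnerProductSpace ℝ V]
    [FiniteDimensional ℝ V] (n : ℕ) (hrank : Module.finrank ℝ V = 2 * n)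
    (B : V →ₗ[ℝ] V)
    (hB : ∀ u v : V, (inner ℝ (B u) v : ℝ) = -(inner ℝ u (B v) : ℝ))
    (hBbij : Function.Bijective B) :
    ∃ a : Fin n → ℝ, (∀ k, 0 < a k) ∧
      ∃ e : OrthonormalBasis (Fin (2 * n)) ℝ V,
        ∀ k : Fin n,
          B (e ⟨2 * (k : ℕ), by have := k.isLt; omega⟩)
              = a k • e ⟨2 * (k : ℕ) + 1, by have := k.isLt; omega⟩ ∧
          B (e ⟨2 * (k : ℕ) + 1, by have := k.isLt; omega⟩)
              = -(a k) • e ⟨2 * (k : ℕ), by have := k.isLt; omega⟩ := by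
  exact skew_aux n V hrank B hB hBbij.injective
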